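/- Let Φ : 𝒞(ℝ^c) → 𝒞(ℝ^d) be an arbitrary lattice homomorphism. Then for every C ∈ 𝒞(ℝ^c), Φ(C) ⊆ conv(⋃_{x ∈ ℝ^c} Φ({x})); in particular, if F ⊆ ℝ^d is a convex set containing Φ({x}) for every x ∈ ℝ^c, then Φ(C) ⊆ F for every C ∈ 𝒞(ℝ^c). -/

import Mathlib

open Set

noncomputable section

/-- Euclidean space `ℝ^n`. -/
abbrev E (n : ℕ) := EuclideanSpace ℝ (Fin n)

/-- A convex body of `ℝ^n`: a compact convex subset (possibly empty). -/
def IsBody {n : ℕ} (C : Set (E n)) : Prop := Convex ℝ C ∧ IsCompact C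

/-- `Φ` represents a lattice homomorphism from `𝒞(ℝ^c)` to `𝒞(ℝ^d)`: it maps convex bodies
to convex bodies, and on convex bodies it preserves intersections (the lattice meet) and
convex hulls of unions (the lattice join). -/
def IsLatHom {c d : ℕ} (Φ : Set (E c) → Set (E d)) : Prop :=
  (∀ C, IsBody C → IsBody (Φ C)) ∧
  ∀ C D : Set (E c), IsBody C → IsBody D →
    Φ (C ∩ D) = Φ C ∩ Φ D ∧ Φ (convexHull ℝ (C ∪ D)) = convexHull ℝ (Φ C ∪ Φ D)

/-- `Φ` is non-trivial: it is not constant on convex bodies. -/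
def NonTrivial {c d : ℕ} (Φ : Set (E c) → Set (E d)) : Prop :=
  ∃ C D : Set (E c), IsBody C ∧ IsBody D ∧ Φ C ≠ Φ D

/-- The closed ray emanating from `o` in direction `u`. -/
def Ray {n : ℕ} (o u : E n) : Set (E n) := {p | ∃ t : ℝ, 0 ≤ t ∧ p = o + t • u}

/-- An affine hyperplane of `ℝ^n`: a nonempty affine subspace of dimension `n - 1`. -/
def IsHyperplane {n : ℕ} (H : AffineSubspace ℝ (E n)) : Prop :=
  (H : Set (E n)).Nonempty ∧ Module.finrank ℝ H.direction + 1 = n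

open scoped Classical in
/-- The dimension of a convex set: the dimension of its affine hull, with `sdim ∅ = -1`. -/
def sdim {n : ℕ} (s : Set (E n)) : ℤ :=
  if s = ∅ then -1 else Module.finrank ℝ (affineSpan ℝ s).direction

set_option maxRecDepth 4000

private lemma body_singleton {n : ℕ} (x : E n) : IsBody ({x} : Set (E n)) :=
  ⟨convex_singleton x, isCompact_singleton⟩

private lemma body_hull {n : ℕ} (s : Finset (E n)) : IsBody (convexHull ℝ (s : Set (E n))) :=
  ⟨convex_convexHull _ _, s.finite_toSet.isCompact_convexHull ℝ⟩

private lemma phi_mono {c d : ℕ} {Φ : Set (E c) → Set (E d)} (hΦ : IsLatHom Φ)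
    {C D : Set (E c)} (hC : IsBody C) (hD : IsBody D) (h : C ⊆ D) : Φ C ⊆ Φ D := by
  have h1 := (hΦ.2 C D hC hD).1
  rw [inter_eq_left.mpr h] at h1
  rw [h1]; exact inter_subset_right

private lemma phi_finset {c d : ℕ} {Φ : Set (E c) → Set (E d)} (hΦ : IsLatHom Φ)
    (s : Finset (E c)) (hs : s.Nonempty) :
    Φ (convexHull ℝ (s : Set (E c))) = convexHull ℝ (⋃ x ∈ (s : Set (E c)), Φ {x}) := by
  induction hs using Finset.Nonempty.cons_induction with
  | singleton a =>
      simp only [Finset.coe_singleton, convexHull_singleton, mem_singleton_iff,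
        iUnion_iUnion_eq_left]
      exact ((hΦ.1 _ (body_singleton a)).1.convexHull_eq).symm
  | cons a t ha ht ih =>
      have hcoe : ((Finset.cons a t ha : Finset (E c)) : Set (E c)) = {a} ∪ (t : Set (E c)) :=
        (Finset.coe_cons ..).trans (insert_eq _ _)
      rw [hcoe, ← convexHull_convexHull_union_right,
        (hΦ.2 {a} (convexHull ℝ (t : Set (E c))) (body_singleton a) (body_hull t)).2, ih,
        convexHull_convexHull_union_right]
      rw [biUnion_union, biUnion_singleton]

private lemma compact_subset_poly {n : ℕ} {C : Set (E n)} (hC : IsCompact C) :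
    ∃ s : Finset (E n), s.Nonempty ∧ C ⊆ convexHull ℝ (s : Set (E n)) := by
  obtain ⟨R, hR0, hR⟩ : ∃ R : ℝ, 0 < R ∧ ∀ x ∈ C, ‖x‖ ≤ R := by
    obtain ⟨R, hR⟩ := hC.isBounded.exists_norm_le
    exact ⟨max R 1, lt_of_lt_of_le one_pos (le_max_right _ _),
      fun x hx => (hR x hx).trans (le_max_left _ _)⟩
  have hVfin : (Set.univ.pi fun _ : Fin n => ({-R, R} : Set ℝ)).Finite :=
    Set.Finite.pi fun _ => (finite_singleton R).insert (-R)
  classical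
  refine ⟨hVfin.toFinset.image (WithLp.toLp 2), ?_, ?_⟩
  · rw [Finset.image_nonempty, ← Finset.coe_nonempty, hVfin.coe_toFinset]
    exact ⟨fun _ => R, fun i _ => Or.inr rfl⟩
  · rw [Finset.coe_image, hVfin.coe_toFinset]
    intro x hx
    have himg := ((WithLp.linearEquiv 2 ℝ (Fin n → ℝ)).symm.toLinearMap).image_convexHull
      (Set.univ.pi fun _ : Fin n => ({-R, R} : Set ℝ))
    rw [LinearEquiv.coe_coe, WithLp.coe_symm_linearEquiv] at himg
    rw [← himg, ← WithLp.toLp_ofLp (x := x)]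
    refine Set.mem_image_of_mem _ ?_
    have key : (convexHull ℝ (Set.univ.pi fun _ : Fin n => ({-R, R} : Set ℝ)) : Set (Fin n → ℝ))
        = Set.univ.pi fun _ : Fin n => convexHull ℝ ({-R, R} : Set ℝ) :=
      convexHull_pi _ _
    rw [key]
    intro i _
    rw [convexHull_pair, segment_eq_Icc (by linarith : (-R : ℝ) ≤ R)]
    have h1 : |x i| ≤ R := by
      refine le_trans ?_ (hR x hx)
      rw [EuclideanSpace.norm_eq, ← Real.sqrt_sq_eq_abs]
      apply Real.sqrt_le_sqrt
      simpa using Finset.single_le_sum (f := fun j => ‖x j‖ ^ 2)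
        (fun j _ => sq_nonneg _) (Finset.mem_univ i)
    exact abs_le.mp h1

/-- The range of a lattice homomorphism is determined by the images of one-point sets:
`Φ(C) ⊆ conv(⋃_x Φ({x}))`; in particular any convex `F` containing every `Φ({x})`
contains every `Φ(C)`. -/
theorem stmt_19 (c d : ℕ) (Φ : Set (E c) → Set (E d)) (hΦ : IsLatHom Φ) :
    (∀ C : Set (E c), IsBody C → Φ C ⊆ convexHull ℝ (⋃ x : E c, Φ {x})) ∧
    (∀ F : Set (E d), Convex ℝ F → (∀ x : E c, Φ {x} ⊆ F) →
      ∀ C : Set (E c), IsBody C → Φ C ⊆ F) := by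
  have h2 : ∀ F : Set (E d), Convex ℝ F → (∀ x : E c, Φ {x} ⊆ F) →
      ∀ C : Set (E c), IsBody C → Φ C ⊆ F := by
    intro F hF hFx C hC
    obtain ⟨s, hs, hCs⟩ := compact_subset_poly hC.2
    refine (phi_mono hΦ hC (body_hull s) hCs).trans ?_
    rw [phi_finset hΦ s hs]
    refine convexHull_min ?_ hF
    exact iUnion₂_subset fun x _ => hFx x
  exact ⟨fun C hC => h2 _ (convex_convexHull _ _)
    (fun x => (subset_iUnion (fun y : E c => Φ {y}) x).trans (subset_convexHull _ _)) C hC, h2⟩
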